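/- The 5-wheel precoloring gadget fails: the graph of Lemma 'no-3C5-2' — a 6-cycle with attached pentagon structure consisting of vertices forming three mutually adjacent-at-distance-2 vertices x, y, z around the edge structure shown — admits no proper 3-coloring of its exact square. Concretely: in any 3-coloring of the exact square of the depicted subcubic planar graph, the vertices y and z (two neighbors of x) would be forced to share x's color, a contradiction. -/

import Mathlib

/-- The exact square of a graph `G`: two distinct vertices are adjacent iff
their distance in `G` is exactly `2`. -/
def exactSquare {V : Type*} (G : SimpleGraph V) : SimpleGraph V where
  Adj u v := G.dist u v = 2
  symm := ⟨fun u v (h : G.dist u v = 2) => (show G.dist v u = 2 by rwa [SimpleGraph.dist_comm])⟩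
  loopless := ⟨fun v (h : G.dist v v = 2) => by simp [SimpleGraph.dist_self] at h⟩

/-- The subcubic planar graph of Figure 8 of the paper (Lemma `no-3C5-2`):
a hexagon `u₁u₂u₃u₄ z s` (vertices `0`–`5`, with `z = 4`, `s = 5`), together
with vertices `x = 6`, `y = 7`, `s' = 8`, `u = 9`, `s'' = 10`, `v = 11`,
`x' = 12`, `a = 13`, `b = 14`, `t = 15`, and the edges as depicted. -/
def figure8Graph : SimpleGraph (Fin 16) :=
  SimpleGraph.fromRel (fun u v => (u.val, v.val) ∈
    [(0,1), (1,2), (2,3), (3,4), (4,5), (5,0),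
     (4,6), (6,7), (7,8), (8,5),
     (8,9), (9,10), (10,11), (11,12), (12,7),
     (3,13), (13,14), (14,6), (14,15), (15,12)])

/-- If `u` and `v` are distinct, nonadjacent, and joined by a path of length 2,
then their distance is exactly 2. -/
lemma dist_eq_two_aux {V : Type*} {G : SimpleGraph V} {u w v : V}
    (h1 : G.Adj u w) (h2 : G.Adj w v) (h3 : ¬G.Adj u v) (h4 : u ≠ v) :
    G.dist u v = 2 := by
  have hle : G.dist u v ≤ 2 := SimpleGraph.dist_le
    (SimpleGraph.Walk.cons h1 (SimpleGraph.Walk.cons h2 SimpleGraph.Walk.nil))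
  have hr : G.Reachable u v :=
    ⟨SimpleGraph.Walk.cons h1 (SimpleGraph.Walk.cons h2 SimpleGraph.Walk.nil)⟩
  have h0 : G.dist u v ≠ 0 := fun h => h4 (hr.dist_eq_zero_iff.mp h)
  have h1' : G.dist u v ≠ 1 := fun h => h3 (SimpleGraph.dist_eq_one_iff_adj.mp h)
  omega

instance : DecidableRel figure8Graph.Adj := fun u v =>
  decidable_of_iff _ (SimpleGraph.fromRel_adj _ u v).symm

/-- K₄-minus-an-edge forcing: if `a` and `b` each differ from two distinct
colors `c` and `d`, then `a = b` (there are only 3 colors). -/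
lemma forced (a b c d : Fin 3) (h1 : a ≠ c) (h2 : a ≠ d) (h3 : b ≠ c)
    (h4 : b ≠ d) (h5 : c ≠ d) : a = b := by
  revert h1 h2 h3 h4 h5; revert a b c d; decide

/-- The graph of Figure 8 admits no proper 3-coloring of its exact square. -/
theorem figure8_not_exactSquare_three_colorable :
    ¬ (exactSquare figure8Graph).Colorable 3 := by
  rintro ⟨C⟩
  set G := figure8Graph with hG
  -- distance-2 facts, each witnessed by a midpoint
  have ne : ∀ u v : Fin 16, ∀ w : Fin 16, G.Adj u w → G.Adj w v →
      ¬G.Adj u v → u ≠ v → C u ≠ C v := by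
    intro u v w h1 h2 h3 h4
    exact C.valid (dist_eq_two_aux h1 h2 h3 h4)
  have d02 : C 0 ≠ C 2 := ne 0 2 1 (by decide) (by decide) (by decide) (by decide)
  have d04 : C 0 ≠ C 4 := ne 0 4 5 (by decide) (by decide) (by decide) (by decide)
  have d08 : C 0 ≠ C 8 := ne 0 8 5 (by decide) (by decide) (by decide) (by decide)
  have d24 : C 2 ≠ C 4 := ne 2 4 3 (by decide) (by decide) (by decide) (by decide)
  have d2_13 : C 2 ≠ C 13 := ne 2 13 3 (by decide) (by decide) (by decide) (by decide)
  have d4_13 : C 4 ≠ C 13 := ne 4 13 3 (by decide) (by decide) (by decide) (by decide)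
  have d13 : C 1 ≠ C 3 := ne 1 3 2 (by decide) (by decide) (by decide) (by decide)
  have d15 : C 1 ≠ C 5 := ne 1 5 0 (by decide) (by decide) (by decide) (by decide)
  have d35 : C 3 ≠ C 5 := ne 3 5 4 (by decide) (by decide) (by decide) (by decide)
  have d36 : C 3 ≠ C 6 := ne 3 6 4 (by decide) (by decide) (by decide) (by decide)
  have d56 : C 5 ≠ C 6 := ne 5 6 4 (by decide) (by decide) (by decide) (by decide)
  have d48 : C 4 ≠ C 8 := ne 4 8 5 (by decide) (by decide) (by decide) (by decide)
  have d68 : C 6 ≠ C 8 := ne 6 8 7 (by decide) (by decide) (by decide) (by decide)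
  have d6_13 : C 6 ≠ C 13 := ne 6 13 14 (by decide) (by decide) (by decide) (by decide)
  have d57 : C 5 ≠ C 7 := ne 5 7 8 (by decide) (by decide) (by decide) (by decide)
  have d59 : C 5 ≠ C 9 := ne 5 9 8 (by decide) (by decide) (by decide) (by decide)
  have d79 : C 7 ≠ C 9 := ne 7 9 8 (by decide) (by decide) (by decide) (by decide)
  have d7_11 : C 7 ≠ C 11 := ne 7 11 12 (by decide) (by decide) (by decide) (by decide)
  have d9_11 : C 9 ≠ C 11 := ne 9 11 10 (by decide) (by decide) (by decide) (by decide)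
  have d47 : C 4 ≠ C 7 := ne 4 7 6 (by decide) (by decide) (by decide) (by decide)
  have d4_14 : C 4 ≠ C 14 := ne 4 14 6 (by decide) (by decide) (by decide) (by decide)
  have d3_14 : C 3 ≠ C 14 := ne 3 14 13 (by decide) (by decide) (by decide) (by decide)
  have d6_15 : C 6 ≠ C 15 := ne 6 15 14 (by decide) (by decide) (by decide) (by decide)
  have d7_15 : C 7 ≠ C 15 := ne 7 15 12 (by decide) (by decide) (by decide) (by decide)
  have d11_15 : C 11 ≠ C 15 := ne 11 15 12 (by decide) (by decide) (by decide) (by decide)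
  -- forcing chain
  have e0_13 : C 0 = C 13 := forced _ _ _ _ d02 d04 d2_13.symm d4_13.symm d24
  have e16 : C 1 = C 6 := forced _ _ _ _ d13 d15 d36.symm d56.symm d35
  have e28 : C 2 = C 8 := forced _ _ _ _ d02.symm d24 d08.symm d48.symm d04
  have e46 : C 4 = C 6 := forced _ _ (C 0) (C 2) d04.symm d24.symm
    (by rw [e0_13]; exact d6_13) (by rw [e28]; exact d68) d02
  have e5_11 : C 5 = C 11 := forced _ _ _ _ d57 d59 d7_11.symm d9_11.symm d79
  have e5_14 : C 5 = C 14 := forced _ _ (C 1) (C 3) d15.symm d35.symm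
    (by rw [e16, ← e46]; exact d4_14.symm) d3_14.symm d13
  have e5_15 : C 5 = C 15 := forced _ _ (C 6) (C 7) d56 d57
    d6_15.symm d7_15.symm (by rw [← e46]; exact d47)
  exact d11_15 (e5_11 ▸ e5_15)
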